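/- arXiv:math/0406416 — 2 statements merged into one kernel-verified Lean document; each statement's English description precedes it below -/
import Mathlib

section
/- Let γ₁ and γ₂ be irrational numbers in (0,1) whose continued fraction expansions [a_1, a_2, …] coincide in the first M−1 partial quotients. Let α_i(γ) denote the i-th Gauss iterate of γ (so α_i(γ) = [a_i, a_{i+1}, …]). Then for every i < M, |log(α_i(γ₁)/α_i(γ₂))| < 2^{i−M+1}. -/
private lemma abs_log_div_comm' (p q : ℝ) : |Real.log (p/q)| = |Real.log (q/p)| := by
  rw [← inv_div q p, Real.log_inv, abs_neg]

private lemma main_step (a x y : ℝ) (ha : 1 ≤ a) (hx0 : 0 < x) (hx1 : x < 1)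
    (hy0 : 0 < y) (hy1 : y < 1) (hxy : x ≤ y) :
    |Real.log ((1/(a+x)) / (1/(a+y)))| ≤ (1/2) * |Real.log (x / y)| ∧
    |Real.log ((1/(a+x)) / (1/(a+y)))| < 1 := by
  have hax : 0 < a + x := by linarith
  have hay : 0 < a + y := by linarith
  have hu : (1/(a+x)) / (1/(a+y)) = (a+y)/(a+x) := by
    field_simp
  rw [hu]
  have hu1 : 1 ≤ (a+y)/(a+x) := by
    rw [le_div_iff₀ hax]; linarith
  have hlu : 0 ≤ Real.log ((a+y)/(a+x)) := Real.log_nonneg hu1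
  have hxy1 : x / y ≤ 1 := by rw [div_le_one hy0]; exact hxy
  have hlxy : Real.log (x/y) ≤ 0 := Real.log_nonpos (by positivity) hxy1
  have habs1 : |Real.log ((a+y)/(a+x))| = Real.log ((a+y)/(a+x)) := abs_of_nonneg hlu
  have habs2 : |Real.log (x/y)| = Real.log (y/x) := by
    rw [abs_of_nonpos hlxy, ← Real.log_inv, inv_div]
  rw [habs1, habs2]
  constructor
  · -- log((a+y)/(a+x)) ≤ (1/2) log(y/x), via ((a+y)/(a+x))^2 ≤ y/x
    have hsq : ((a+y)/(a+x))^2 ≤ y/x := by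
      rw [div_pow, div_le_div_iff₀ (by positivity) hx0]
      nlinarith [mul_nonneg (sub_nonneg.2 hxy) (sub_nonneg.2 (show x*y ≤ a^2 by nlinarith))]
    have := Real.log_le_log (by positivity) hsq
    rw [Real.log_pow] at this
    push_cast at this
    linarith
  · have h2 : (a+y)/(a+x) < 2 := by
      rw [div_lt_iff₀ hax]; linarith
    calc Real.log ((a+y)/(a+x)) < Real.log 2 := Real.log_lt_log (by positivity) h2
      _ < 1 := by
        have := Real.log_two_lt_d9; linarith

private lemma step_lem (a x y : ℝ) (ha : 1 ≤ a) (hx : x ∈ Set.Ioo (0:ℝ) 1)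
    (hy : y ∈ Set.Ioo (0:ℝ) 1) :
    |Real.log ((1/(a+x)) / (1/(a+y)))| ≤ (1/2) * |Real.log (x / y)| ∧
    |Real.log ((1/(a+x)) / (1/(a+y)))| < 1 := by
  rcases le_total x y with h | h
  · exact main_step a x y ha hx.1 hx.2 hy.1 hy.2 h
  · have := main_step a y x ha hy.1 hy.2 hx.1 hx.2 h
    rw [abs_log_div_comm' (1/(a+y)) (1/(a+x)), abs_log_div_comm' y x] at this
    exact this

private lemma aux_mem (A : ℕ → ℝ) (γ : ℝ) (hγ : γ ∈ Set.Ioo (0:ℝ) 1) (hirr : Irrational γ)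
    (h1 : A 1 = γ) (hrec : ∀ i, 1 ≤ i → A (i + 1) = Int.fract (1 / A i)) :
    ∀ i, 1 ≤ i → A i ∈ Set.Ioo (0:ℝ) 1 ∧ Irrational (A i) := by
  intro i hi
  induction i, hi using Nat.le_induction with
  | base => rw [h1]; exact ⟨hγ, hirr⟩
  | succ i hi ih =>
    obtain ⟨⟨h0, hlt⟩, hir⟩ := ih
    have hinv : Irrational (1 / A i) := by
      rw [one_div]; exact hir.inv
    have hfr : Irrational (A (i+1)) := by
      rw [hrec i hi, Int.fract]
      exact hinv.sub_intCast _
    refine ⟨⟨?_, ?_⟩, hfr⟩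
    · exact lt_of_le_of_ne (by rw [hrec i hi]; exact Int.fract_nonneg _) (Ne.symm hfr.ne_zero)
    · rw [hrec i hi]; exact Int.fract_lt_one _

private lemma rel_lem (A : ℕ → ℝ) (i : ℕ) (hIoo : A i ∈ Set.Ioo (0:ℝ) 1)
    (hrec : A (i+1) = Int.fract (1 / A i)) :
    A i = 1/((⌊1/A i⌋ : ℝ) + A (i+1)) ∧ (1:ℝ) ≤ (⌊1/A i⌋ : ℝ) := by
  have h0 := hIoo.1
  have h1 := hIoo.2
  constructor
  · rw [hrec, Int.fract]
    have h : ((⌊1/A i⌋:ℝ)) + (1/A i - ⌊1/A i⌋) = 1/A i := by ring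
    rw [h, one_div_one_div]
  · have h : (1:ℝ) ≤ 1 / A i := one_le_one_div h0 h1.le
    exact_mod_cast Int.le_floor.2 (by exact_mod_cast h)

theorem stmt7 (γ₁ γ₂ : ℝ) (hγ₁ : γ₁ ∈ Set.Ioo (0 : ℝ) 1) (hγ₂ : γ₂ ∈ Set.Ioo (0 : ℝ) 1)
    (hirr₁ : Irrational γ₁) (hirr₂ : Irrational γ₂)
    (M : ℕ) (A₁ A₂ : ℕ → ℝ) (hA₁1 : A₁ 1 = γ₁) (hA₂1 : A₂ 1 = γ₂)
    (hrec₁ : ∀ i, 1 ≤ i → A₁ (i + 1) = Int.fract (1 / A₁ i))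
    (hrec₂ : ∀ i, 1 ≤ i → A₂ (i + 1) = Int.fract (1 / A₂ i))
    (hagree : ∀ i, 1 ≤ i → i ≤ M - 1 → ⌊1 / A₁ i⌋ = ⌊1 / A₂ i⌋) :
    ∀ i, 1 ≤ i → i < M →
      |Real.log (A₁ i / A₂ i)| < (2 : ℝ) ^ ((i : ℤ) - M + 1) := by
  have mem₁ := aux_mem A₁ γ₁ hγ₁ hirr₁ hA₁1 hrec₁
  have mem₂ := aux_mem A₂ γ₂ hγ₂ hirr₂ hA₂1 hrec₂
  have key : ∀ d i : ℕ, 1 ≤ i → i + d = M - 1 →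
      |Real.log (A₁ i / A₂ i)| < (2:ℝ) ^ (-(d:ℤ)) := by
    intro d
    induction d with
    | zero =>
      intro i hi hiM
      have hiM' : i ≤ M - 1 := by omega
      obtain ⟨e₁, _⟩ := rel_lem A₁ i (mem₁ i hi).1 (hrec₁ i hi)
      obtain ⟨e₂, ha₂⟩ := rel_lem A₂ i (mem₂ i hi).1 (hrec₂ i hi)
      rw [hagree i hi hiM'] at e₁
      have hstep := step_lem ((⌊1/A₂ i⌋:ℝ)) (A₁ (i+1)) (A₂ (i+1)) ha₂
        (mem₁ (i+1) (by omega)).1 (mem₂ (i+1) (by omega)).1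
      rw [← e₁, ← e₂] at hstep
      simpa using hstep.2
    | succ d ih =>
      intro i hi hiM
      have hiM' : i ≤ M - 1 := by omega
      have ih' := ih (i+1) (by omega) (by omega)
      obtain ⟨e₁, _⟩ := rel_lem A₁ i (mem₁ i hi).1 (hrec₁ i hi)
      obtain ⟨e₂, ha₂⟩ := rel_lem A₂ i (mem₂ i hi).1 (hrec₂ i hi)
      rw [hagree i hi hiM'] at e₁
      have hstep := step_lem ((⌊1/A₂ i⌋:ℝ)) (A₁ (i+1)) (A₂ (i+1)) ha₂
        (mem₁ (i+1) (by omega)).1 (mem₂ (i+1) (by omega)).1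
      rw [← e₁, ← e₂] at hstep
      calc |Real.log (A₁ i / A₂ i)|
          ≤ (1/2) * |Real.log (A₁ (i+1) / A₂ (i+1))| := hstep.1
        _ < (1/2) * (2:ℝ) ^ (-(d:ℤ)) := by
            exact mul_lt_mul_of_pos_left ih' (by norm_num)
        _ = (2:ℝ) ^ (-((d+1:ℕ):ℤ)) := by
            rw [show (-((d+1:ℕ):ℤ)) = -(d:ℤ) + (-1) by push_cast; ring,
              zpow_add₀ (by norm_num : (2:ℝ) ≠ 0)]
            norm_num
            ring
  intro i hi1 hiM
  have hd : i + (M - 1 - i) = M - 1 := by omega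
  have hk := key (M - 1 - i) i hi1 hd
  have he : ((i:ℤ) - M + 1) = -((M - 1 - i : ℕ):ℤ) := by omega
  rw [he]
  exact hk
end

section
/- Let θ ∈ (0,1) be irrational with Gauss iterates θ_1 = θ, θ_{n+1} = {1/θ_n}, and convergent denominators q_n. Then the Brjuno sum B(θ) = Σ_n log(q_{n+1})/q_n is finite if and only if the Yoccoz–Brjuno sum Φ(θ) = Σ_{n≥1} θ_1 θ_2 ⋯ θ_{n−1} log(1/θ_n) is finite. -/
theorem stmt17 (θ : ℝ) (hθ : θ ∈ Set.Ioo (0 : ℝ) 1) (hirr : Irrational θ)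
    -- Gauss iterates `θ_1 = θ`, `θ_{n+1} = {1/θ_n}`
    (t : ℕ → ℝ) (ht1 : t 1 = θ)
    (htrec : ∀ n, 1 ≤ n → t (n + 1) = Int.fract (1 / t n))
    -- partial quotients and convergent denominators
    (r : ℕ → ℕ) (hr : ∀ n, 1 ≤ n → r n = ⌊1 / t n⌋₊)
    (q : ℕ → ℕ) (hq0 : q 0 = 0) (hq1 : q 1 = 1)
    (hqrec : ∀ n, 1 ≤ n → q (n + 1) = r (n + 1) * q n + q (n - 1)) :
    -- `B(θ) = ∑_{n≥1} log(q_{n+1})/q_n < ∞  ↔  Φ(θ) = ∑_{n≥1} θ₁⋯θ_{n-1} log(1/θ_n) < ∞`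
    Summable (fun n : ℕ => Real.log (q (n + 2)) / (q (n + 1) : ℝ)) ↔
      Summable (fun n : ℕ =>
        (∏ i ∈ Finset.Icc 1 n, t i) * Real.log (1 / t (n + 1))) := by
  obtain ⟨hθ0, hθ1⟩ := hθ
  have idx : ∀ k : ℕ, k + 1 + 1 = k + 2 := fun _ => rfl
  -- basic facts about the Gauss iterates
  have key : ∀ n : ℕ, (t (n + 1) ∈ Set.Ioo (0 : ℝ) 1) ∧ Irrational (t (n + 1)) := by
    intro n
    induction n with
    | zero => rw [ht1]; exact ⟨⟨hθ0, hθ1⟩, hirr⟩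
    | succ m ih =>
      obtain ⟨⟨h0, h1⟩, hI⟩ := ih
      have hinv : Irrational (1 / t (m + 1)) := by rw [one_div]; exact hI.inv
      have hfr : Irrational (Int.fract (1 / t (m + 1))) :=
        hinv.sub_intCast ⌊1 / t (m + 1)⌋
      have hrec := htrec (m + 1) (by omega)
      rw [hrec]
      refine ⟨⟨?_, Int.fract_lt_one _⟩, hfr⟩
      rcases lt_or_eq_of_le (Int.fract_nonneg (1 / t (m + 1))) with h | h
      · exact h
      · exact absurd h.symm hfr.ne_zero
  have t_pos : ∀ n, 0 < t (n + 1) := fun n => (key n).1.1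
  have t_lt1 : ∀ n, t (n + 1) < 1 := fun n => (key n).1.2
  have t_ne : ∀ n, t (n + 1) ≠ 0 := fun n => ne_of_gt (t_pos n)
  have t_gt : ∀ n, 1 < 1 / t (n + 1) := fun n => (one_lt_div (t_pos n)).mpr (t_lt1 n)
  -- partial quotients
  have hrfl : ∀ n : ℕ, (r (n + 1) : ℝ) = ((⌊1 / t (n + 1)⌋ : ℤ) : ℝ) := by
    intro n
    rw [hr (n + 1) (by omega)]
    exact natCast_floor_eq_intCast_floor (le_of_lt (lt_trans one_pos (t_gt n)))
  have r_ge1 : ∀ n : ℕ, 1 ≤ r (n + 1) := by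
    intro n
    rw [hr (n + 1) (by omega)]
    exact Nat.le_floor (by exact_mod_cast (t_gt n).le)
  have trec : ∀ n : ℕ, t (n + 2) = 1 / t (n + 1) - (r (n + 1) : ℝ) := by
    intro n
    have h := htrec (n + 1) (by omega)
    rw [idx] at h
    rw [h, hrfl n]
    rfl
  -- the products
  set P : ℕ → ℝ := fun n => ∏ i ∈ Finset.Icc 1 n, t i with hP
  have P0 : P 0 = 1 := by simp [hP]
  have Psucc : ∀ n, P (n + 1) = P n * t (n + 1) := by
    intro n
    simp only [hP]
    rw [Finset.prod_Icc_succ_top (by omega)]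
  have Ppos : ∀ n, 0 < P n := by
    intro n
    induction n with
    | zero => rw [P0]; exact one_pos
    | succ m ih => rw [Psucc]; exact mul_pos ih (t_pos m)
  have Ple : ∀ n, P (n + 1) ≤ P n := by
    intro n
    rw [Psucc]
    nlinarith [Ppos n, t_lt1 n, t_pos n]
  have Ple1 : ∀ n, P n ≤ 1 := by
    intro n
    induction n with
    | zero => rw [P0]
    | succ m ih => exact le_trans (Ple m) ih
  have Prec : ∀ n, P (n + 2) = P n - (r (n + 1) : ℝ) * P (n + 1) := by
    intro n
    have h1 := Psucc (n + 1)
    rw [idx] at h1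
    rw [h1, trec n, Psucc n, mul_sub, mul_one_div, mul_div_assoc,
      div_self (t_ne n), mul_one]
    ring
  -- the fundamental identity
  have ident : ∀ n, (q (n + 1) : ℝ) * P (n + 1) + (q n : ℝ) * P (n + 2) = θ := by
    intro n
    induction n with
    | zero =>
      show (q 1 : ℝ) * P 1 + (q 0 : ℝ) * P 2 = θ
      rw [hq0, hq1, show P 1 = P 0 * t 1 from Psucc 0, P0, ht1]
      norm_num
    | succ m ih =>
      have hq := hqrec (m + 1) (by omega)
      simp only [Nat.add_sub_cancel] at hq
      rw [idx] at hq
      have hPr := Prec (m + 1)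
      rw [idx] at hPr
      rw [idx]
      rw [hq, hPr]
      push_cast
      push_cast at ih
      linear_combination ih
  -- q facts
  have qpos : ∀ n, 1 ≤ q (n + 1) := by
    intro n
    induction n with
    | zero => exact hq1.ge
    | succ m ih =>
      have hq := hqrec (m + 1) (by omega)
      simp only [Nat.add_sub_cancel] at hq
      have h2 := Nat.mul_le_mul (r_ge1 (m + 1)) ih
      calc 1 = 1 * 1 := rfl
        _ ≤ r (m + 1 + 1) * q (m + 1) := h2
        _ ≤ r (m + 1 + 1) * q (m + 1) + q m := Nat.le_add_right _ _
        _ = q (m + 1 + 1) := hq.symm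
  have qmono : ∀ n, q (n + 1) ≤ q (n + 1 + 1) := by
    intro n
    have hq := hqrec (n + 1) (by omega)
    simp only [Nat.add_sub_cancel] at hq
    calc q (n + 1) = 1 * q (n + 1) := (one_mul _).symm
      _ ≤ r (n + 1 + 1) * q (n + 1) := Nat.mul_le_mul_right _ (r_ge1 (n + 1))
      _ ≤ r (n + 1 + 1) * q (n + 1) + q n := Nat.le_add_right _ _
      _ = q (n + 1 + 1) := hq.symm
  have q0le : ∀ n, q n ≤ q (n + 1) := by
    intro n
    cases n with
    | zero => omega
    | succ m => exact qmono m
  have qgrow : ∀ n, 2 * q (n + 1) ≤ q (n + 2 + 1) := by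
    intro n
    have hq := hqrec (n + 2) (by omega)
    simp only [show n + 2 - 1 = n + 1 from rfl] at hq
    calc 2 * q (n + 1) = q (n + 1) + q (n + 1) := by ring
      _ ≤ r (n + 2 + 1) * q (n + 2) + q (n + 1) :=
          Nat.add_le_add_right
            (le_trans (qmono n) (Nat.le_mul_of_pos_left _ (r_ge1 (n + 2)))) _
      _ = q (n + 2 + 1) := hq.symm
  have qR : ∀ n, (1 : ℝ) ≤ (q (n + 1) : ℝ) := fun n => by exact_mod_cast qpos n
  have qRpos : ∀ n, (0 : ℝ) < (q (n + 1) : ℝ) := fun n => lt_of_lt_of_le one_pos (qR n)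
  -- bounds relating P and q
  have Pub : ∀ n, (q (n + 1) : ℝ) * P (n + 1) ≤ θ := by
    intro n
    have h := ident n
    have h2 : 0 ≤ (q n : ℝ) * P (n + 2) :=
      mul_nonneg (Nat.cast_nonneg _) (Ppos _).le
    linarith
  have Plb : ∀ n, θ ≤ 2 * ((q (n + 1) : ℝ) * P (n + 1)) := by
    intro n
    have h := ident n
    have h1 : (q n : ℝ) ≤ (q (n + 1) : ℝ) := by exact_mod_cast q0le n
    have h2 : P (n + 2) ≤ P (n + 1) := Ple (n + 1)
    have h3 := mul_le_mul h1 h2 (Ppos (n + 2)).le (Nat.cast_nonneg (q (n + 1)))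
    linarith
  have hP1q : ∀ n, P (n + 1) ≤ 1 / (q (n + 1) : ℝ) := by
    intro n
    rw [le_div_iff₀ (qRpos n)]
    nlinarith [Pub n]
  have hqP2 : ∀ n, (1 : ℝ) / (q (n + 1) : ℝ) ≤ (2 / θ) * P (n + 1) := by
    intro n
    rw [div_le_iff₀ (qRpos n)]
    have h := Plb n
    have h2 : (2 / θ) * P (n + 1) * (q (n + 1) : ℝ)
        = (2 * ((q (n + 1) : ℝ) * P (n + 1))) / θ := by ring
    rw [h2, le_div_iff₀ hθ0, one_mul]
    linarith
  -- sqrt facts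
  set α : ℝ := Real.sqrt (Real.sqrt 2) with hα
  have sqrt2_gt : 1 < Real.sqrt 2 := by
    rw [show (1 : ℝ) = Real.sqrt 1 from Real.sqrt_one.symm]
    exact Real.sqrt_lt_sqrt (by norm_num) (by norm_num)
  have sqrt2_le : Real.sqrt 2 ≤ 2 := by
    nlinarith [Real.sq_sqrt (show (0:ℝ) ≤ 2 by norm_num), Real.sqrt_nonneg 2]
  have αgt : 1 < α := by
    rw [hα, show (1 : ℝ) = Real.sqrt 1 from Real.sqrt_one.symm]
    exact Real.sqrt_lt_sqrt (by norm_num) (by linarith)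
  have αpos : 0 < α := lt_trans one_pos αgt
  have αsq : α ^ 2 = Real.sqrt 2 := Real.sq_sqrt (Real.sqrt_nonneg 2)
  have αle2 : α ≤ 2 := by nlinarith
  have sq1 : ∀ n, 1 ≤ Real.sqrt (q (n + 1)) := fun n => Real.one_le_sqrt.mpr (qR n)
  have sgrow0 : ∀ n, α ^ n ≤ 2 * Real.sqrt (q (n + 1)) ∧
      α ^ (n + 1) ≤ 2 * Real.sqrt (q (n + 1 + 1)) := by
    intro n
    induction n with
    | zero =>
      constructor
      · have hs : (1 : ℝ) ≤ Real.sqrt (q (0 + 1)) := sq1 0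
        calc α ^ 0 = 1 := pow_zero α
          _ ≤ 2 * 1 := by norm_num
          _ ≤ 2 * Real.sqrt (q (0 + 1)) := by linarith
      · have hs : (1 : ℝ) ≤ Real.sqrt (q (0 + 1 + 1)) := sq1 1
        calc α ^ (0 + 1) = α := pow_one α
          _ ≤ 2 := αle2
          _ = 2 * 1 := (mul_one 2).symm
          _ ≤ 2 * Real.sqrt (q (0 + 1 + 1)) := by linarith
    | succ m ih =>
      refine ⟨ih.2, ?_⟩
      have ihm := ih.1
      have hc : ((2 * q (m + 1) : ℕ) : ℝ) ≤ ((q (m + 2 + 1) : ℕ) : ℝ) := by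
        exact_mod_cast qgrow m
      push_cast at hc
      have hsq2 := Real.sqrt_nonneg (2 : ℝ)
      have hsqq := Real.sqrt_nonneg ((q (m + 1) : ℝ))
      show α ^ (m + 2) ≤ 2 * Real.sqrt (q (m + 2 + 1))
      calc α ^ (m + 2) = α ^ m * α ^ 2 := by ring
        _ = α ^ m * Real.sqrt 2 := by rw [αsq]
        _ ≤ (2 * Real.sqrt (q (m + 1))) * Real.sqrt 2 := by nlinarith
        _ = 2 * Real.sqrt (2 * (q (m + 1) : ℝ)) := by
            rw [Real.sqrt_mul (by norm_num : (0:ℝ) ≤ 2)]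
            ring
        _ ≤ 2 * Real.sqrt (q (m + 2 + 1)) := by
            have := Real.sqrt_le_sqrt hc
            linarith
  have sgrow : ∀ n, α ^ n ≤ 2 * Real.sqrt (q (n + 1)) := fun n => (sgrow0 n).1
  -- summability of 1/sqrt (q (n+1))
  have Saux : Summable (fun n : ℕ => 1 / Real.sqrt (q (n + 1))) := by
    have hsum : Summable (fun n : ℕ => 2 * (α⁻¹) ^ n) :=
      (summable_geometric_of_lt_one (by positivity) (inv_lt_one_of_one_lt₀ αgt)).mul_left 2
    apply Summable.of_nonneg_of_le (fun n => by positivity) (fun n => ?_) hsum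
    have h2 : (0 : ℝ) < α ^ n / 2 := by positivity
    calc 1 / Real.sqrt (q (n + 1)) ≤ 1 / (α ^ n / 2) :=
          one_div_le_one_div_of_le h2 (by linarith [sgrow n])
      _ = 2 * (α⁻¹) ^ n := by
          rw [one_div_div, inv_pow, div_eq_mul_inv]
  -- log facts
  have sqpos : ∀ n, 0 < Real.sqrt (q (n + 1)) := fun n => lt_of_lt_of_le one_pos (sq1 n)
  have hlogq0 : ∀ n, 0 ≤ Real.log (q (n + 1)) := fun n => Real.log_nonneg (qR n)
  have hlogdivq : ∀ n, Real.log (q (n + 1)) / (q (n + 1) : ℝ)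
      ≤ 2 * (1 / Real.sqrt (q (n + 1))) := by
    intro n
    have hs := sq1 n
    have hsq : Real.sqrt (q (n + 1)) * Real.sqrt (q (n + 1)) = (q (n + 1) : ℝ) :=
      Real.mul_self_sqrt (by linarith [qR n])
    have hlog : Real.log (q (n + 1)) ≤ 2 * Real.sqrt (q (n + 1)) := by
      have h := Real.log_le_sub_one_of_pos (sqpos n)
      rw [Real.log_sqrt (by linarith [qR n])] at h
      linarith
    rw [div_le_iff₀ (qRpos n)]
    have hne : Real.sqrt (q (n + 1)) ≠ 0 := ne_of_gt (sqpos n)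
    calc Real.log (q (n + 1)) ≤ 2 * Real.sqrt (q (n + 1)) := hlog
      _ = 2 * (1 / Real.sqrt (q (n + 1))) * (q (n + 1) : ℝ) := by
          field_simp
          linear_combination hsq
  have hinvq : ∀ n, 1 / (q (n + 1) : ℝ) ≤ 1 / Real.sqrt (q (n + 1)) := by
    intro n
    apply one_div_le_one_div_of_le (sqpos n)
    calc Real.sqrt (q (n + 1)) = Real.sqrt (q (n + 1)) * 1 := (mul_one _).symm
      _ ≤ Real.sqrt (q (n + 1)) * Real.sqrt (q (n + 1)) := by nlinarith [sq1 n]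
      _ = (q (n + 1) : ℝ) := Real.mul_self_sqrt (by linarith [qR n])
  set c : ℝ := Real.log (2 / θ) with hc
  have c0 : 0 ≤ c := Real.log_nonneg (by rw [le_div_iff₀ hθ0]; linarith)
  -- log splitting
  have hsplit : ∀ n, Real.log (1 / P (n + 2)) =
      Real.log (1 / P (n + 1)) + Real.log (1 / t (n + 2)) := by
    intro n
    have h1 := Psucc (n + 1)
    rw [idx] at h1
    rw [one_div, one_div, one_div, Real.log_inv, Real.log_inv, Real.log_inv, h1,
      Real.log_mul (ne_of_gt (Ppos (n + 1))) (t_ne (n + 1))]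
    ring
  have hPlog : ∀ n, Real.log (1 / P (n + 1)) ≤ c + Real.log (q (n + 1)) := by
    intro n
    have h1 : 1 / P (n + 1) ≤ (2 / θ) * (q (n + 1) : ℝ) := by
      rw [div_le_iff₀ (Ppos (n + 1))]
      have h := Plb n
      have h2 : (2 / θ) * (q (n + 1) : ℝ) * P (n + 1)
          = (2 * ((q (n + 1) : ℝ) * P (n + 1))) / θ := by ring
      rw [h2, le_div_iff₀ hθ0, one_mul]
      linarith
    calc Real.log (1 / P (n + 1)) ≤ Real.log ((2 / θ) * (q (n + 1) : ℝ)) :=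
          Real.log_le_log (one_div_pos.mpr (Ppos (n + 1))) h1
      _ = c + Real.log (q (n + 1)) := by
          rw [Real.log_mul (ne_of_gt (div_pos two_pos hθ0)) (ne_of_gt (qRpos n)), hc]
  have hP0log : ∀ n, 0 ≤ Real.log (1 / P (n + 1)) := by
    intro n
    apply Real.log_nonneg
    rw [le_div_iff₀ (Ppos (n + 1)), one_mul]
    exact Ple1 (n + 1)
  have hqlogP : ∀ n, Real.log (q (n + 2)) ≤ Real.log (1 / P (n + 2)) := by
    intro n
    apply Real.log_le_log (qRpos (n + 1))
    rw [le_div_iff₀ (Ppos (n + 2))]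
    have h := Pub (n + 1)
    rw [idx] at h
    linarith
  have logt0 : ∀ n, 0 ≤ Real.log (1 / t (n + 1)) := fun n => Real.log_nonneg (t_gt n).le
  -- bound for P (n+1) * log (1/P (n+1))
  have hPlogP : ∀ n, P (n + 1) * Real.log (1 / P (n + 1))
      ≤ (c + 2) * (1 / Real.sqrt (q (n + 1))) := by
    intro n
    have h1 := mul_le_mul (hP1q n) (hPlog n) (hP0log n)
      (by positivity : (0:ℝ) ≤ 1 / (q (n + 1) : ℝ))
    calc P (n + 1) * Real.log (1 / P (n + 1))
        ≤ (1 / (q (n + 1) : ℝ)) * (c + Real.log (q (n + 1))) := h1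
      _ = c * (1 / (q (n + 1) : ℝ)) + Real.log (q (n + 1)) / (q (n + 1) : ℝ) := by
          ring
      _ ≤ (c + 2) * (1 / Real.sqrt (q (n + 1))) := by
          have h3 := hlogdivq n
          have h5 := mul_le_mul_of_nonneg_left (hinvq n) c0
          nlinarith
  constructor
  · -- B summable → Φ summable
    intro hB
    apply (summable_nat_add_iff 1).mp
    show Summable (fun n : ℕ => P (n + 1) * Real.log (1 / t (n + 1 + 1)))
    apply Summable.of_nonneg_of_le
      (fun n => mul_nonneg (Ppos _).le (logt0 (n + 1)))
      (fun n => ?_) (hB.add (Saux.mul_left c))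
    show P (n + 1) * Real.log (1 / t (n + 2)) ≤
      Real.log (q (n + 2)) / (q (n + 1) : ℝ) + c * (1 / Real.sqrt (q (n + 1)))
    have h1 : Real.log (1 / t (n + 2)) ≤ Real.log (1 / P (n + 2)) := by
      have ha := hsplit n
      have hb := hP0log n
      linarith
    have h2 : Real.log (1 / P (n + 2)) ≤ c + Real.log (q (n + 2)) := by
      have h := hPlog (n + 1)
      rw [idx] at h
      exact h
    have h3 : P (n + 1) * Real.log (1 / t (n + 2))
        ≤ (1 / (q (n + 1) : ℝ)) * (c + Real.log (q (n + 2))) := by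
      apply mul_le_mul (hP1q n) (h1.trans h2) ?_ (by positivity)
      exact Real.log_nonneg (t_gt (n + 1)).le
    have h4 := hinvq n
    have h5 := mul_le_mul_of_nonneg_left h4 c0
    calc P (n + 1) * Real.log (1 / t (n + 2))
        ≤ (1 / (q (n + 1) : ℝ)) * (c + Real.log (q (n + 2))) := h3
      _ = Real.log (q (n + 2)) / (q (n + 1) : ℝ) + c * (1 / (q (n + 1) : ℝ)) := by
          ring
      _ ≤ Real.log (q (n + 2)) / (q (n + 1) : ℝ)
          + c * (1 / Real.sqrt (q (n + 1))) := by linarith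
  · -- Φ summable → B summable
    intro hΦ
    have hΦ' : Summable (fun n : ℕ => P (n + 1) * Real.log (1 / t (n + 1 + 1))) :=
      (summable_nat_add_iff (f := fun n : ℕ => P n * Real.log (1 / t (n + 1))) 1).mpr hΦ
    apply Summable.of_nonneg_of_le
      (fun n => div_nonneg (hlogq0 (n + 1)) (Nat.cast_nonneg _))
      (fun n => ?_) ((hΦ'.mul_left (2 / θ)).add (Saux.mul_left ((2 / θ) * (c + 2))))
    show Real.log (q (n + 2)) / (q (n + 1) : ℝ)
        ≤ (2 / θ) * (P (n + 1) * Real.log (1 / t (n + 2)))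
          + ((2 / θ) * (c + 2)) * (1 / Real.sqrt (q (n + 1)))
    have h0 : 0 ≤ Real.log (q (n + 2)) := hlogq0 (n + 1)
    have h1 : Real.log (q (n + 2)) / (q (n + 1) : ℝ)
        ≤ ((2 / θ) * P (n + 1)) * Real.log (1 / P (n + 2)) := by
      rw [div_eq_mul_one_div]
      calc Real.log (q (n + 2)) * (1 / (q (n + 1) : ℝ))
          ≤ Real.log (1 / P (n + 2)) * ((2 / θ) * P (n + 1)) :=
            mul_le_mul (hqlogP n) (hqP2 n) (by positivity) (h0.trans (hqlogP n))
        _ = ((2 / θ) * P (n + 1)) * Real.log (1 / P (n + 2)) := by ring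
    have h2 : ((2 / θ) * P (n + 1)) * Real.log (1 / P (n + 2))
        = (2 / θ) * (P (n + 1) * Real.log (1 / P (n + 1)))
          + (2 / θ) * (P (n + 1) * Real.log (1 / t (n + 2))) := by
      rw [hsplit n]
      ring
    have h3 := hPlogP n
    have h4 : (0:ℝ) ≤ 2 / θ := by positivity
    have h5 := mul_le_mul_of_nonneg_left h3 h4
    calc Real.log (q (n + 2)) / (q (n + 1) : ℝ)
        ≤ ((2 / θ) * P (n + 1)) * Real.log (1 / P (n + 2)) := h1
      _ = (2 / θ) * (P (n + 1) * Real.log (1 / P (n + 1)))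
          + (2 / θ) * (P (n + 1) * Real.log (1 / t (n + 2))) := h2
      _ ≤ (2 / θ) * (P (n + 1) * Real.log (1 / t (n + 2)))
          + ((2 / θ) * (c + 2)) * (1 / Real.sqrt (q (n + 1))) := by nlinarith
end
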